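/- Let p be even and let α_0,…,α_{p-2} ∈ 𝔻, α_{p-1} = (1+a)/(1+conj(a)) for some a ∈ 𝔻 (so |α_{p-1}| = 1). Then the finite CMV matrix C built from α_0,…,α_{p-1} satisfies: its characteristic polynomial det(z·I - C) equals the monic polynomial Φ̃_p(z) = z Φ_{p-1}(z) - conj(α_{p-1}) Φ*_{p-1}(z), where Φ_{p-1} is the (p-1)-st monic Szegő polynomial for α_0,…,α_{p-2}. -/

import Mathlib

open Polynomial Matrix

/-- `ρ = √(1 - |α|²)`. -/
noncomputable def rho (a : ℂ) : ℝ := Real.sqrt (1 - ‖a‖ ^ 2)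

/-- The reversed polynomial at degree `k`. -/
noncomputable def rev (k : ℕ) (P : Polynomial ℂ) : Polynomial ℂ :=
  Polynomial.reflect k (P.map (starRingEnd ℂ))

/-- The monic Szegő orthogonal polynomials. -/
noncomputable def szego (α : ℕ → ℂ) : ℕ → Polynomial ℂ
  | 0 => 1
  | k + 1 => X * szego α k - Polynomial.C ((starRingEnd ℂ) (α k)) * rev k (szego α k)

/-- `L = Θ_0 ⊕ Θ_2 ⊕ … ⊕ Θ_{p-2}` (for `p` even). -/
noncomputable def Lmat (n : ℕ) (α : ℕ → ℂ) : Matrix (Fin n) (Fin n) ℂ :=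
  Matrix.of fun i j =>
    if i.val % 2 = 0 then
      if j.val = i.val then (starRingEnd ℂ) (α i.val)
      else if j.val = i.val + 1 then (rho (α i.val) : ℂ) else 0
    else
      if j.val = i.val then -α (i.val - 1)
      else if j.val + 1 = i.val then (rho (α (i.val - 1)) : ℂ) else 0

/-- `M = [1] ⊕ Θ_1 ⊕ … ⊕ Θ_{n-3} ⊕ [conj α_{n-1}]` (for `n` even). -/
noncomputable def Mmat (n : ℕ) (α : ℕ → ℂ) : Matrix (Fin n) (Fin n) ℂ :=
  Matrix.of fun i j =>
    if i.val = 0 then (if j.val = 0 then 1 else 0)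
    else if i.val = n - 1 then (if j.val = n - 1 then (starRingEnd ℂ) (α (n - 1)) else 0)
    else if i.val % 2 = 1 then
      if j.val = i.val then (starRingEnd ℂ) (α i.val)
      else if j.val = i.val + 1 then (rho (α i.val) : ℂ) else 0
    else
      if j.val = i.val then -α (i.val - 1)
      else if j.val + 1 = i.val then (rho (α (i.val - 1)) : ℂ) else 0


variable {R : Type*} [CommRing R]

/-- truncated tridiagonal matrix -/
noncomputable def tri (d u l : ℕ → R) (n : ℕ) : Matrix (Fin n) (Fin n) R :=
  Matrix.of fun i j =>
    if i.val = j.val then d i.val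
    else if i.val + 1 = j.val then u i.val
    else if j.val + 1 = i.val then l j.val else 0

lemma tri_apply (d u l : ℕ → R) (n : ℕ) (i j : Fin n) :
    tri d u l n i j =
    if i.val = j.val then d i.val
    else if i.val + 1 = j.val then u i.val
    else if j.val + 1 = i.val then l j.val else 0 := rfl

lemma tri_zero (d u l : ℕ → R) : (tri d u l 0).det = 1 := Matrix.det_fin_zero

lemma tri_one (d u l : ℕ → R) : (tri d u l 1).det = d 0 := by
  rw [Matrix.det_fin_one]; rfl

lemma tri_sub_last (d u l : ℕ → R) (n : ℕ) :
    (tri d u l (n+1)).submatrix Fin.castSucc Fin.castSucc = tri d u l n := by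
  ext i j
  simp [tri, Matrix.submatrix_apply]

lemma tri_det_rec (d u l : ℕ → R) (n : ℕ) :
    (tri d u l (n+2)).det
      = d (n+1) * (tri d u l (n+1)).det - u n * l n * (tri d u l n).det := by
  rw [Matrix.det_succ_row (tri d u l (n+2)) (Fin.last (n+1))]
  rw [Fin.sum_univ_castSucc, Fin.sum_univ_castSucc]
  have hz : ∀ j : Fin n, (-1:R) ^ ((Fin.last (n+1)).val + ((j.castSucc.castSucc : Fin (n+2))).val)
      * tri d u l (n+2) (Fin.last (n+1)) j.castSucc.castSucc
      * ((tri d u l (n+2)).submatrix (Fin.last (n+1)).succAbove (j.castSucc.castSucc).succAbove).det = 0 := by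
    intro j
    have hj : (j.castSucc.castSucc : Fin (n+2)).val = j.val := rfl
    have hl : (Fin.last (n+1) : Fin (n+2)).val = n + 1 := rfl
    have h1 : j.val < n := j.isLt
    have : tri d u l (n+2) (Fin.last (n+1)) j.castSucc.castSucc = 0 := by
      rw [tri_apply, hj, hl, if_neg (by omega), if_neg (by omega), if_neg (by omega)]
    rw [this]; ring
  rw [Finset.sum_eq_zero (fun j _ => hz j), zero_add]
  -- last term : j = last
  have hlast : tri d u l (n+2) (Fin.last (n+1)) (Fin.last (n+1)) = d (n+1) := by
    rw [tri_apply]; simp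
  have hsublast : ((tri d u l (n+2)).submatrix (Fin.last (n+1)).succAbove
      (Fin.last (n+1)).succAbove).det = (tri d u l (n+1)).det := by
    rw [Fin.succAbove_last, tri_sub_last]
  -- penultimate term : j = castSucc (last n) i.e. val = n
  have hvpen : ((Fin.last n).castSucc : Fin (n+2)).val = n := rfl
  have hvl : (Fin.last (n+1) : Fin (n+2)).val = n + 1 := rfl
  have hpen : tri d u l (n+2) (Fin.last (n+1)) ((Fin.last n).castSucc) = l n := by
    rw [tri_apply, hvpen, hvl, if_neg (by omega), if_neg (by omega), if_pos (by omega)]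
  -- the penultimate minor
  have hminor : ((tri d u l (n+2)).submatrix (Fin.last (n+1)).succAbove
      ((Fin.last n).castSucc : Fin (n+2)).succAbove).det = u n * (tri d u l n).det := by
    set B := (tri d u l (n+2)).submatrix (Fin.last (n+1)).succAbove
      ((Fin.last n).castSucc : Fin (n+2)).succAbove with hB
    have hBe : ∀ (i : Fin (n+1)) (j : Fin (n+1)),
        B i j = tri d u l (n+2) i.castSucc (((Fin.last n).castSucc : Fin (n+2)).succAbove j) := by
      intro i j; rw [hB, Matrix.submatrix_apply, Fin.succAbove_last]
    have hsa : ∀ j : Fin (n+1), j.val < n →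
        ((((Fin.last n).castSucc : Fin (n+2)).succAbove j) : Fin (n+2)).val = j.val := by
      intro j hj
      rw [Fin.succAbove_castSucc_of_lt]
      · rfl
      · exact hj
    have hsal : ((((Fin.last n).castSucc : Fin (n+2)).succAbove (Fin.last n)) : Fin (n+2)).val = n+1 := by
      rw [Fin.succAbove_of_le_castSucc _ _ (le_refl _)]
      rfl
    rw [Matrix.det_succ_column B (Fin.last n), Fin.sum_univ_castSucc]
    have hz : ∀ i : Fin n, (-1:R) ^ (((i.castSucc : Fin (n+1))).val + (Fin.last n).val)
        * B i.castSucc (Fin.last n) * (B.submatrix (i.castSucc).succAbove (Fin.last n).succAbove).det = 0 := by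
      intro i
      have : B i.castSucc (Fin.last n) = 0 := by
        rw [hBe, tri_apply]
        have h1 : ((i.castSucc : Fin (n+1)).castSucc : Fin (n+2)).val = i.val := rfl
        have h2 : i.val < n := i.isLt
        rw [h1, hsal, if_neg (by omega), if_neg (by omega), if_neg (by omega)]
      rw [this]; ring
    rw [Finset.sum_eq_zero (fun i _ => hz i), zero_add]
    have hBl : B (Fin.last n) (Fin.last n) = u n := by
      rw [hBe, tri_apply]
      have h1 : ((Fin.last n).castSucc : Fin (n+2)).val = n := rfl
      rw [h1, hsal, if_neg (by omega), if_pos (by omega)]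
    have hmin : (B.submatrix (Fin.last n).succAbove (Fin.last n).succAbove) = tri d u l n := by
      ext i j
      rw [Matrix.submatrix_apply, Fin.succAbove_last, hBe, tri_apply, tri_apply]
      have h1 : ((i.castSucc : Fin (n+1)).castSucc : Fin (n+2)).val = i.val := rfl
      have h2 : (((Fin.last n).castSucc : Fin (n+2)).succAbove j.castSucc).val = j.val :=
        hsa j.castSucc j.isLt
      rw [h1, h2]
    rw [hBl, hmin]
    have : (-1:R) ^ ((Fin.last n).val + (Fin.last n).val) = 1 := by
      have : (Fin.last n).val + (Fin.last n).val = 2*n := by simp [Fin.val_last]; ring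
      rw [this, pow_mul]; simp
    rw [this]; ring
  rw [hlast, hsublast, hpen, hminor, hvpen, hvl]
  have : (-1:R) ^ (n + 1 + n) = -1 := by
    have : n + 1 + n = 2*n+1 := by ring
    rw [this, pow_succ, pow_mul]; simp
  rw [this]
  have : (-1:R) ^ (n + 1 + (n+1)) = 1 := by
    have : n + 1 + (n+1) = 2*(n+1) := by ring
    rw [this, pow_mul]; simp
  rw [this]
  ring





lemma natDegree_reflect_le {P : ℂ[X]} {k : ℕ} (h : P.natDegree ≤ k) :
    (reflect k P).natDegree ≤ k := by
  rw [natDegree_le_iff_coeff_eq_zero]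
  intro N hN
  rw [coeff_reflect, revAt_eq_self_of_lt hN]
  exact coeff_eq_zero_of_natDegree_lt (lt_of_le_of_lt h hN)

lemma natDegree_szego_le (α : ℕ → ℂ) (k : ℕ) : (szego α k).natDegree ≤ k := by
  induction k with
  | zero => simp [szego]
  | succ k ih =>
    rw [szego]
    apply le_trans (natDegree_sub_le _ _)
    simp only [max_le_iff]
    constructor
    · apply le_trans (natDegree_mul_le)
      have := natDegree_X (R := ℂ)
      simp only [natDegree_X]
      omega
    · apply le_trans (natDegree_mul_le)
      have h1 : (rev k (szego α k)).natDegree ≤ k := by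
        apply _root_.natDegree_reflect_le
        exact le_trans (natDegree_map_le) ih
      simpa using le_trans h1 (Nat.le_succ k)

lemma natDegree_rev_le (α : ℕ → ℂ) (k : ℕ) : (rev k (szego α k)).natDegree ≤ k :=
  natDegree_reflect_le (le_trans (natDegree_map_le) (natDegree_szego_le α k))

lemma reflect_reflect {k : ℕ} (P : ℂ[X]) : reflect k (reflect k P) = P := by
  ext i
  rw [coeff_reflect, coeff_reflect, revAt_invol]

lemma reflect_succ {k : ℕ} (Q : ℂ[X]) (h : Q.natDegree ≤ k) :
    reflect (k+1) Q = X * reflect k Q := by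
  have h1 : reflect (1 + k) ((1 : ℂ[X]) * Q) = reflect 1 (1:ℂ[X]) * reflect k Q :=
    reflect_mul 1 Q (by simp) h
  have h2 : reflect 1 (1:ℂ[X]) = X := by
    have : (1 : ℂ[X]) = X ^ 0 := by simp
    rw [this, reflect_monomial]
    simp
  rw [one_mul] at h1
  rw [add_comm 1 k] at h1
  rw [h1, h2]

lemma map_conj_rev (k : ℕ) (P : ℂ[X]) :
    (rev k P).map (starRingEnd ℂ) = reflect k P := by
  rw [rev, ← reflect_map]
  congr 1
  ext i
  simp

lemma rev_szego_succ (α : ℕ → ℂ) (k : ℕ) :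
    rev (k+1) (szego α (k+1)) = rev k (szego α k) - C (α k) * (X * szego α k) := by
  rw [szego, rev]
  rw [Polynomial.map_sub, Polynomial.map_mul, Polynomial.map_mul, map_X, map_C]
  rw [reflect_sub]
  have hd : ((szego α k).map (starRingEnd ℂ)).natDegree ≤ k :=
    le_trans (natDegree_map_le) (natDegree_szego_le α k)
  have h1 : reflect (k+1) (X * (szego α k).map (starRingEnd ℂ))
      = rev k (szego α k) := by
    rw [add_comm k 1] at *
    rw [reflect_mul X _ (natDegree_X_le) hd]
    rw [show (X : ℂ[X]) = X^1 by simp, reflect_monomial]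
    simp [rev]
  have h2 : reflect (k+1) (C ((starRingEnd ℂ) ((starRingEnd ℂ) (α k))) * (rev k (szego α k)).map (starRingEnd ℂ))
      = C (α k) * (X * szego α k) := by
    rw [Complex.conj_conj, map_conj_rev, reflect_C_mul]
    rw [reflect_succ _ (natDegree_reflect_le (natDegree_szego_le α k)), reflect_reflect]
  rw [h1, h2]



lemma Lmat_entries (p : ℕ) (α : ℕ → ℂ) (i k : Fin p) :
    Lmat p α i k =
      if k.val = 2*(i.val/2) then
        (if i.val % 2 = 0 then (starRingEnd ℂ) (α (2*(i.val/2))) else ((rho (α (2*(i.val/2))) : ℝ) : ℂ))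
      else if k.val = 2*(i.val/2)+1 then
        (if i.val % 2 = 0 then ((rho (α (2*(i.val/2))) : ℝ) : ℂ) else -α (2*(i.val/2)))
      else 0 := by
  rw [Lmat, Matrix.of_apply]
  rcases Nat.mod_two_eq_zero_or_one i.val with h | h
  · have e : 2*(i.val/2) = i.val := by omega
    rw [e, if_pos h]
    split_ifs <;> first | rfl | omega
  · have e : 2*(i.val/2) = i.val - 1 := by omega
    have e2 : i.val - 1 + 1 = i.val := by omega
    rw [e, e2, if_neg (by omega : ¬ i.val % 2 = 0)]
    split_ifs <;> first | rfl | omega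

lemma rho_conj (x : ℂ) : (starRingEnd ℂ) ((rho x : ℝ) : ℂ) = ((rho x : ℝ) : ℂ) :=
  Complex.conj_ofReal _

lemma rho_sq (c : ℂ) (h : ‖c‖ ≤ 1) :
    (((rho c : ℝ) : ℂ))^2 = 1 - (starRingEnd ℂ) c * c := by
  have h0 : (0:ℝ) ≤ 1 - ‖c‖ ^ 2 := by
    nlinarith [norm_nonneg c]
  have : (rho c)^2 = 1 - ‖c‖ ^ 2 := Real.sq_sqrt h0
  have hc : (starRingEnd ℂ) c * c = ((‖c‖ ^ 2 : ℝ) : ℂ) := by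
    rw [mul_comm, Complex.mul_conj, Complex.sq_norm]
  rw [hc, ← Complex.ofReal_pow, this]
  push_cast
  ring

lemma L_mul_adj (p : ℕ) (hp : p % 2 = 0) (α : ℕ → ℂ)
    (hα : ∀ j, j < p → ‖α j‖ ≤ 1) :
    Lmat p α * (Lmat p α)ᴴ = 1 := by
  ext i j
  have hip : i.val < p := i.isLt
  have hjp : j.val < p := j.isLt
  have h2t : 2*(i.val/2)+1 < p := by omega
  set c : ℕ := 2*(i.val/2) with hc
  set k₀ : Fin p := ⟨c, by omega⟩ with hk₀
  set k₁ : Fin p := ⟨c+1, by omega⟩ with hk₁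
  have hvk₀ : k₀.val = c := rfl
  have hvk₁ : k₁.val = c+1 := rfl
  have hne : k₀ ≠ k₁ := by
    intro hcon
    have := congrArg Fin.val hcon
    rw [hvk₀, hvk₁] at this
    omega
  have hmul : (Lmat p α * (Lmat p α)ᴴ) i j
      = ∑ k : Fin p, Lmat p α i k * (starRingEnd ℂ) (Lmat p α j k) := by
    simp [Matrix.mul_apply, Matrix.conjTranspose_apply]
  rw [hmul]
  have hsupp : ∀ k : Fin p, k ∉ ({k₀, k₁} : Finset (Fin p)) →
      Lmat p α i k * (starRingEnd ℂ) (Lmat p α j k) = 0 := by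
    intro k hk
    simp only [Finset.mem_insert, Finset.mem_singleton] at hk
    push_neg at hk
    obtain ⟨h0, h1⟩ := hk
    have hv0 : ¬ k.val = c := fun hcon => h0 (Fin.ext (by rw [hcon, hvk₀]))
    have hv1 : ¬ k.val = c+1 := fun hcon => h1 (Fin.ext (by rw [hcon, hvk₁]))
    rw [Lmat_entries, if_neg (by rw [← hc]; exact hv0), if_neg (by rw [← hc]; exact hv1), zero_mul]
  rw [← Finset.sum_subset (Finset.subset_univ {k₀, k₁}) (fun k _ hk => hsupp k hk),
    Finset.sum_pair hne]
  have E0 : Lmat p α i k₀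
      = if i.val % 2 = 0 then (starRingEnd ℂ) (α c) else ((rho (α c) : ℝ) : ℂ) := by
    rw [Lmat_entries, if_pos hvk₀]
  have E1 : Lmat p α i k₁
      = if i.val % 2 = 0 then ((rho (α c) : ℝ) : ℂ) else -α c := by
    rw [Lmat_entries, if_neg (by rw [hvk₁]; omega), if_pos hvk₁]
  by_cases hts : i.val/2 = j.val/2
  · have hcc : (2*(j.val/2) : ℕ) = c := by omega
    have F0 : Lmat p α j k₀
        = if j.val % 2 = 0 then (starRingEnd ℂ) (α c) else ((rho (α c) : ℝ) : ℂ) := by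
      rw [Lmat_entries, if_pos (by rw [hvk₀]; omega), hcc]
    have F1 : Lmat p α j k₁
        = if j.val % 2 = 0 then ((rho (α c) : ℝ) : ℂ) else -α c := by
      rw [Lmat_entries, if_neg (by rw [hvk₁]; omega), if_pos (by rw [hvk₁]; omega), hcc]
    have hρ := rho_sq (α c) (hα c (by omega))
    rcases Nat.mod_two_eq_zero_or_one i.val with hi | hi <;>
      rcases Nat.mod_two_eq_zero_or_one j.val with hj | hj
    · rw [if_pos hi] at E0 E1
      rw [if_pos hj] at F0 F1
      have hij : i = j := Fin.ext (by omega)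
      rw [E0, E1, F0, F1, hij, Matrix.one_apply_eq, Complex.conj_conj, rho_conj]
      linear_combination hρ
    · rw [if_pos hi] at E0 E1
      rw [if_neg (by omega)] at F0 F1
      have hij : i ≠ j := fun hcon => by rw [hcon] at hi; omega
      rw [E0, E1, F0, F1, Matrix.one_apply_ne hij, rho_conj, map_neg]
      ring
    · rw [if_neg (by omega)] at E0 E1
      rw [if_pos hj] at F0 F1
      have hij : i ≠ j := fun hcon => by rw [hcon] at hi; omega
      rw [E0, E1, F0, F1, Matrix.one_apply_ne hij, rho_conj, Complex.conj_conj]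
      ring
    · rw [if_neg (by omega)] at E0 E1
      rw [if_neg (by omega)] at F0 F1
      have hij : i = j := Fin.ext (by omega)
      rw [E0, E1, F0, F1, hij, Matrix.one_apply_eq, rho_conj, map_neg]
      linear_combination hρ
  · have F0 : Lmat p α j k₀ = 0 := by
      rw [Lmat_entries, if_neg (by rw [hvk₀]; omega), if_neg (by rw [hvk₀]; omega)]
    have F1 : Lmat p α j k₁ = 0 := by
      rw [Lmat_entries, if_neg (by rw [hvk₁]; omega), if_neg (by rw [hvk₁]; omega)]
    have hij : i ≠ j := fun hcon => by rw [hcon] at hts; omega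
    rw [F0, F1, Matrix.one_apply_ne hij]
    simp



noncomputable def dA (α : ℕ → ℂ) (i : ℕ) : Polynomial ℂ :=
  if i % 2 = 0 then (if i = 0 then X * C (α 0) - 1 else X * C (α i) + C (α (i-1)))
  else (-(X * C ((starRingEnd ℂ) (α (i-1)))) - C ((starRingEnd ℂ) (α i)))

noncomputable def uA (α : ℕ → ℂ) (i : ℕ) : Polynomial ℂ :=
  if i % 2 = 0 then X * C (((rho (α i) : ℝ) : ℂ)) else -C (((rho (α i) : ℝ) : ℂ))


lemma Amat_eq (p : ℕ) (hp : p % 2 = 0) (hp2 : 2 ≤ p) (α : ℕ → ℂ) :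
    (X : Polynomial ℂ) • ((Lmat p α)ᴴ.map C) - (Mmat p α).map C
      = tri (dA α) (uA α) (uA α) p := by
  ext i j
  have hip : i.val < p := i.isLt
  have hjp : j.val < p := j.isLt
  rw [Matrix.sub_apply, Matrix.smul_apply, Matrix.map_apply, Matrix.map_apply,
    Matrix.conjTranspose_apply, tri_apply, smul_eq_mul]
  by_cases h1 : i.val = j.val
  · rw [if_pos h1]
    rcases Nat.mod_two_eq_zero_or_one i.val with hi | hi
    · by_cases h0 : i.val = 0
      · have hL : Lmat p α j i = (starRingEnd ℂ) (α 0) := by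
          rw [Lmat, Matrix.of_apply, if_pos (by omega), if_pos (by omega)]
          rw [← h1, h0]
        have hM : Mmat p α i j = 1 := by
          rw [Mmat, Matrix.of_apply, if_pos h0, if_pos (by omega)]
        rw [hL, hM, dA, if_pos hi, if_pos h0]
        simp [Complex.star_def, Complex.conj_conj]
      · have hL : Lmat p α j i = (starRingEnd ℂ) (α i.val) := by
          rw [Lmat, Matrix.of_apply, if_pos (by omega), if_pos (by omega), ← h1]
        have hM : Mmat p α i j = -α (i.val - 1) := by
          rw [Mmat, Matrix.of_apply, if_neg h0, if_neg (by omega), if_neg (by omega),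
            if_pos h1.symm]
        rw [hL, hM, dA, if_pos hi, if_neg h0]
        simp only [Complex.star_def, Complex.conj_conj, map_neg, sub_neg_eq_add]
    · have hL : Lmat p α j i = -α (i.val - 1) := by
        rw [Lmat, Matrix.of_apply, if_neg (by omega), if_pos h1, ← h1]
      have hM : Mmat p α i j = (starRingEnd ℂ) (α i.val) := by
        by_cases hl : i.val = p - 1
        · rw [Mmat, Matrix.of_apply, if_neg (by omega), if_pos hl, if_pos (by omega), ← hl]
        · rw [Mmat, Matrix.of_apply, if_neg (by omega), if_neg hl, if_pos hi, if_pos h1.symm]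
      rw [hL, hM, dA, if_neg (by omega)]
      simp only [Complex.star_def, map_neg]
      ring
  · rw [if_neg h1]
    by_cases h2 : i.val + 1 = j.val
    · rw [if_pos h2, uA]
      rcases Nat.mod_two_eq_zero_or_one i.val with hi | hi
      · have hL : Lmat p α j i = ((rho (α i.val) : ℝ) : ℂ) := by
          rw [Lmat, Matrix.of_apply, if_neg (by omega), if_neg (by omega), if_pos (by omega)]
          rw [show j.val - 1 = i.val by omega]
        have hM : Mmat p α i j = 0 := by
          by_cases h0 : i.val = 0
          · rw [Mmat, Matrix.of_apply, if_pos h0, if_neg (by omega)]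
          · rw [Mmat, Matrix.of_apply, if_neg h0, if_neg (by omega), if_neg (by omega),
              if_neg (by omega), if_neg (by omega)]
        rw [hL, hM, if_pos hi]
        simp [Complex.star_def, Complex.conj_ofReal]
      · have hL : Lmat p α j i = 0 := by
          rw [Lmat, Matrix.of_apply, if_pos (by omega), if_neg (by omega), if_neg (by omega)]
        have hM : Mmat p α i j = ((rho (α i.val) : ℝ) : ℂ) := by
          rw [Mmat, Matrix.of_apply, if_neg (by omega), if_neg (by omega), if_pos hi,
            if_neg (by omega), if_pos h2.symm]
        rw [hL, hM, if_neg (by omega)]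
        simp
    · rw [if_neg h2]
      by_cases h3 : j.val + 1 = i.val
      · rw [if_pos h3, uA]
        rcases Nat.mod_two_eq_zero_or_one i.val with hi | hi
        · have hL : Lmat p α j i = 0 := by
            rw [Lmat, Matrix.of_apply, if_neg (by omega), if_neg (by omega), if_neg (by omega)]
          have hM : Mmat p α i j = ((rho (α j.val) : ℝ) : ℂ) := by
            rw [Mmat, Matrix.of_apply, if_neg (by omega), if_neg (by omega), if_neg (by omega),
              if_neg (by omega), if_pos h3]
            rw [show i.val - 1 = j.val by omega]
          rw [hL, hM, if_neg (by omega)]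
          simp
        · have hL : Lmat p α j i = ((rho (α j.val) : ℝ) : ℂ) := by
            rw [Lmat, Matrix.of_apply, if_pos (by omega), if_neg (by omega), if_pos (by omega)]
          have hM : Mmat p α i j = 0 := by
            by_cases hl : i.val = p - 1
            · rw [Mmat, Matrix.of_apply, if_neg (by omega), if_pos hl, if_neg (by omega)]
            · rw [Mmat, Matrix.of_apply, if_neg (by omega), if_neg hl, if_pos hi,
                if_neg (by omega), if_neg (by omega)]
          rw [hL, hM, if_pos (by omega)]
          simp [Complex.star_def, Complex.conj_ofReal]
      · rw [if_neg h3]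
        have hL : Lmat p α j i = 0 := by
          rcases Nat.mod_two_eq_zero_or_one j.val with hj | hj
          · rw [Lmat, Matrix.of_apply, if_pos hj, if_neg (by omega), if_neg (by omega)]
          · rw [Lmat, Matrix.of_apply, if_neg (by omega), if_neg (by omega), if_neg (by omega)]
        have hM : Mmat p α i j = 0 := by
          by_cases h0 : i.val = 0
          · rw [Mmat, Matrix.of_apply, if_pos h0, if_neg (by omega)]
          · by_cases hl : i.val = p - 1
            · rw [Mmat, Matrix.of_apply, if_neg h0, if_pos hl, if_neg (by omega)]
            · rcases Nat.mod_two_eq_zero_or_one i.val with hi | hi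
              · rw [Mmat, Matrix.of_apply, if_neg h0, if_neg hl, if_neg (by omega),
                  if_neg (by omega), if_neg (by omega)]
              · rw [Mmat, Matrix.of_apply, if_neg h0, if_neg hl, if_pos hi,
                  if_neg (by omega), if_neg (by omega)]
        rw [hL, hM]
        simp


noncomputable def dL (α : ℕ → ℂ) (i : ℕ) : ℂ :=
  if i % 2 = 0 then (starRingEnd ℂ) (α i) else -α (i-1)

noncomputable def uL (α : ℕ → ℂ) (i : ℕ) : ℂ :=
  if i % 2 = 0 then ((rho (α i) : ℝ) : ℂ) else 0

lemma Lmat_eq_tri (p : ℕ) (α : ℕ → ℂ) : Lmat p α = tri (dL α) (uL α) (uL α) p := by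
  ext i j
  rw [tri_apply]
  by_cases h1 : i.val = j.val
  · rw [if_pos h1]
    rcases Nat.mod_two_eq_zero_or_one i.val with hi | hi
    · have hL : Lmat p α i j = (starRingEnd ℂ) (α i.val) := by
        rw [Lmat, Matrix.of_apply, if_pos hi, if_pos h1.symm]
      rw [hL, dL, if_pos hi]
    · have hL : Lmat p α i j = -α (i.val - 1) := by
        rw [Lmat, Matrix.of_apply, if_neg (by omega), if_pos h1.symm]
      rw [hL, dL, if_neg (by omega)]
  · by_cases h2 : i.val + 1 = j.val
    · rw [if_neg h1, if_pos h2]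
      rcases Nat.mod_two_eq_zero_or_one i.val with hi | hi
      · have hL : Lmat p α i j = ((rho (α i.val) : ℝ) : ℂ) := by
          rw [Lmat, Matrix.of_apply, if_pos hi, if_neg (by omega), if_pos (by omega)]
        rw [hL, uL, if_pos hi]
      · have hL : Lmat p α i j = 0 := by
          rw [Lmat, Matrix.of_apply, if_neg (by omega), if_neg (by omega), if_neg (by omega)]
        rw [hL, uL, if_neg (by omega)]
    · by_cases h3 : j.val + 1 = i.val
      · rw [if_neg h1, if_neg h2, if_pos h3]
        rcases Nat.mod_two_eq_zero_or_one j.val with hj | hj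
        · have hL : Lmat p α i j = ((rho (α j.val) : ℝ) : ℂ) := by
            rw [Lmat, Matrix.of_apply, if_neg (by omega), if_neg (by omega), if_pos h3,
              show i.val - 1 = j.val from by omega]
          rw [hL, uL, if_pos hj]
        · have hL : Lmat p α i j = 0 := by
            rw [Lmat, Matrix.of_apply, if_pos (by omega), if_neg (by omega), if_neg (by omega)]
          rw [hL, uL, if_neg (by omega)]
      · rw [if_neg h1, if_neg h2, if_neg h3]
        rcases Nat.mod_two_eq_zero_or_one i.val with hi | hi
        · rw [Lmat, Matrix.of_apply, if_pos hi, if_neg (by omega), if_neg (by omega)]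
        · rw [Lmat, Matrix.of_apply, if_neg (by omega), if_neg (by omega), if_neg (by omega)]

lemma detL_pair (α : ℕ → ℂ) : ∀ k : ℕ, (∀ j, j < 2*k → ‖α j‖ ≤ 1) →
    (tri (dL α) (uL α) (uL α) (2*k)).det = (-1:ℂ)^k ∧
    (tri (dL α) (uL α) (uL α) (2*k+1)).det = (-1:ℂ)^k * (starRingEnd ℂ) (α (2*k)) := by
  intro k
  induction k with
  | zero =>
    intro _
    constructor
    · rw [show 2*0 = 0 from rfl, tri_zero]
      norm_num
    · rw [show 2*0+1 = 1 from rfl, tri_one, dL, if_pos (by omega)]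
      norm_num
  | succ k ih =>
    intro h
    obtain ⟨h2k, h2k1⟩ := ih (fun j hj => h j (by omega))
    have hρ := rho_sq (α (2*k)) (h _ (by omega))
    have hu : uL α (2*k) * uL α (2*k)
        = 1 - (starRingEnd ℂ) (α (2*k)) * α (2*k) := by
      rw [uL, if_pos (by omega)]
      linear_combination hρ
    have hE : (tri (dL α) (uL α) (uL α) (2*(k+1))).det = (-1:ℂ)^(k+1) := by
      rw [show 2*(k+1) = 2*k+2 from by ring, tri_det_rec, h2k1, h2k, hu, dL,
        if_neg (by omega), show 2*k+1-1 = 2*k from by omega, pow_succ]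
      ring
    refine ⟨hE, ?_⟩
    rw [show 2*(k+1)+1 = (2*k+1)+2 from by ring, tri_det_rec,
      show (2*k+1)+1 = 2*(k+1) from by ring, hE, h2k1, dL, if_pos (by omega),
      uL, if_neg (by omega)]
    ring

lemma C_rho_sq (c : ℂ) (h : ‖c‖ ≤ 1) :
    (C (((rho c : ℝ) : ℂ)) : Polynomial ℂ)^2 = 1 - C ((starRingEnd ℂ) c) * C c := by
  rw [← map_pow, rho_sq c h]
  simp

lemma D_pair (α : ℕ → ℂ) : ∀ k : ℕ, (∀ j, j < 2*k → ‖α j‖ ≤ 1) →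
    (tri (dA α) (uA α) (uA α) (2*k)).det = (-1:Polynomial ℂ)^k * szego α (2*k) ∧
    (tri (dA α) (uA α) (uA α) (2*k+1)).det
      = (-1:Polynomial ℂ)^(k+1) * rev (2*k+1) (szego α (2*k+1)) := by
  intro k
  induction k with
  | zero =>
    intro _
    have hrev0 : rev 0 (szego α 0) = 1 := by
      ext i
      simp [rev, szego, coeff_reflect]
    constructor
    · rw [show 2*0 = 0 from rfl, tri_zero]
      simp [szego]
    · have hrev : rev 1 (szego α 1)
          = rev 0 (szego α 0) - C (α 0) * (X * szego α 0) := rev_szego_succ α 0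
      rw [show 2*0+1 = 1 from rfl, tri_one, dA, if_pos (by omega), if_pos rfl, hrev, hrev0,
        show szego α 0 = 1 from rfl]
      ring
  | succ k ih =>
    intro h
    obtain ⟨hD0, hD1⟩ := ih (fun j hj => h j (by omega))
    have hρ0 := C_rho_sq (α (2*k)) (h _ (by omega))
    have hρ1 := C_rho_sq (α (2*k+1)) (h _ (by omega))
    have hu0 : uA α (2*k) * uA α (2*k)
        = X^2 * (1 - C ((starRingEnd ℂ) (α (2*k))) * C (α (2*k))) := by
      rw [uA, if_pos (by omega)]
      linear_combination (X:Polynomial ℂ)^2 * hρ0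
    have hu1 : uA α (2*k+1) * uA α (2*k+1)
        = 1 - C ((starRingEnd ℂ) (α (2*k+1))) * C (α (2*k+1)) := by
      rw [uA, if_neg (by omega)]
      linear_combination hρ1
    have hrev1 : rev (2*k+1) (szego α (2*k+1))
        = rev (2*k) (szego α (2*k)) - C (α (2*k)) * (X * szego α (2*k)) :=
      rev_szego_succ α (2*k)
    have hrev2 : rev (2*k+2) (szego α (2*k+2))
        = rev (2*k+1) (szego α (2*k+1)) - C (α (2*k+1)) * (X * szego α (2*k+1)) :=
      rev_szego_succ α (2*k+1)
    have hrev3 : rev (2*k+3) (szego α (2*k+3))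
        = rev (2*k+2) (szego α (2*k+2)) - C (α (2*k+2)) * (X * szego α (2*k+2)) :=
      rev_szego_succ α (2*k+2)
    have hs1 : szego α (2*k+1) = X * szego α (2*k)
        - C ((starRingEnd ℂ) (α (2*k))) * rev (2*k) (szego α (2*k)) := by
      rw [szego]
    have hs2 : szego α (2*k+2) = X * szego α (2*k+1)
        - C ((starRingEnd ℂ) (α (2*k+1))) * rev (2*k+1) (szego α (2*k+1)) := by
      rw [show 2*k+2 = (2*k+1)+1 from rfl, szego]
    have hs3 : szego α (2*k+3) = X * szego α (2*k+2)
        - C ((starRingEnd ℂ) (α (2*k+2))) * rev (2*k+2) (szego α (2*k+2)) := by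
      rw [show 2*k+3 = (2*k+2)+1 from rfl, szego]
    have hE : (tri (dA α) (uA α) (uA α) (2*(k+1))).det
        = (-1:Polynomial ℂ)^(k+1) * szego α (2*(k+1)) := by
      rw [show 2*(k+1) = 2*k+2 from by ring, tri_det_rec, hD1, hD0, hu0, dA,
        if_neg (by omega), show 2*k+1-1 = 2*k from by omega,
        hs2, hrev1, hs1, pow_succ]
      ring
    refine ⟨hE, ?_⟩
    have hE2 : (tri (dA α) (uA α) (uA α) (2*k+2)).det
        = (-1:Polynomial ℂ)^(k+1) * szego α (2*k+2) := by
      rw [show 2*k+2 = 2*(k+1) from by ring]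
      exact hE
    rw [show 2*(k+1)+1 = (2*k+1)+2 from by ring, tri_det_rec,
      show (2*k+1)+1 = 2*k+2 from by ring, hE2, hD1, hu1, dA, if_pos (by omega),
      if_neg (by omega), show 2*k+2-1 = 2*k+1 from by omega]
    rw [show (2*k+1)+2 = 2*k+3 from by ring, hrev3, hrev2, hs2, hrev1, hs1,
      pow_succ, pow_succ]
    ring

/-- The characteristic polynomial of the finite CMV matrix with coefficients
`α_0, …, α_{p-2} ∈ 𝔻` and `α_{p-1} = (1+a)/(1+conj a)` (`a ∈ 𝔻`, so
`|α_{p-1}| = 1`) is the monic polynomial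
`Φ̃_p(z) = z Φ_{p-1}(z) - conj(α_{p-1}) Φ*_{p-1}(z)`. -/
theorem cmv_charpoly (p : ℕ) (hp : Even p) (hp2 : 2 ≤ p) (α : ℕ → ℂ)
    (hα : ∀ j < p - 1, ‖α j‖ < 1)
    (a : ℂ) (ha : ‖a‖ < 1)
    (hlast : α (p - 1) = (1 + a) / (1 + (starRingEnd ℂ) a)) :
    Matrix.charpoly (Lmat p α * Mmat p α) =
      X * szego α (p - 1) -
        Polynomial.C ((starRingEnd ℂ) (α (p - 1))) * rev (p - 1) (szego α (p - 1)) := by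
  have hp' : p % 2 = 0 := Nat.even_iff.mp hp
  set m := p / 2 with hm
  have hpm : p = 2 * m := by omega
  have hα' : ∀ j, j < p → ‖α j‖ ≤ 1 := by
    intro j hj
    by_cases hjl : j = p - 1
    · rw [hjl, hlast, norm_div]
      have hcc : (1 + (starRingEnd ℂ) a) = (starRingEnd ℂ) (1 + a) := by simp
      rw [hcc, Complex.norm_conj]
      exact div_self_le_one _
    · exact le_of_lt (hα j (by omega))
  have hL1 := L_mul_adj p hp' α hα'
  have hfact : charmatrix (Lmat p α * Mmat p α)
      = (Lmat p α).map C * tri (dA α) (uA α) (uA α) p := by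
    rw [← Amat_eq p hp' hp2 α]
    rw [Matrix.mul_sub, Matrix.mul_smul, ← Matrix.map_mul, ← Matrix.map_mul, hL1,
      Matrix.map_one C (map_zero C) (map_one C)]
    rw [charmatrix, Matrix.smul_one_eq_diagonal]
    rfl
  rw [Matrix.charpoly, hfact, Matrix.det_mul]
  have hdetL : ((Lmat p α).map C).det = Polynomial.C ((-1:ℂ)^m) := by
    rw [← RingHom.mapMatrix_apply, ← RingHom.map_det]
    congr 1
    rw [Lmat_eq_tri, hpm]
    exact (detL_pair α m (fun j hj => hα' j (by omega))).1
  have hdetA : (tri (dA α) (uA α) (uA α) p).det = (-1:Polynomial ℂ)^m * szego α p := by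
    rw [hpm]
    exact (D_pair α m (fun j hj => hα' j (by omega))).1
  rw [hdetL, hdetA]
  have hC : (Polynomial.C ((-1:ℂ)^m)) = (-1:Polynomial ℂ)^m := by
    rw [map_pow, map_neg, Polynomial.C_1]
  rw [hC, ← mul_assoc, ← pow_add]
  have hev : ((-1:Polynomial ℂ))^(m+m) = 1 := Even.neg_one_pow ⟨m, rfl⟩
  rw [hev, one_mul]
  conv_lhs => rw [show p = (p-1)+1 from by omega]
  rw [szego]
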